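/- arXiv:0911.5328 — 2 statements merged into one kernel-verified Lean document; each statement's English description precedes it below -/
import Mathlib

section
/- Let A be a topological ring, B ⊆ A a dense subring, and M a right A-module which is admissible, i.e. for every m ∈ M the annihilator {a ∈ A : ma = 0} is an open subset of A. If M is simple as a right A-module, then M is simple as a right B-module. -/
/-- Let `A` be a topological ring, `B ⊆ A` a dense subring, and `M` an
admissible right `A`-module (all annihilators of elements are open). If `M` is
simple over `A` then it is simple over `B`: `M ≠ 0` and every additive
subgroup of `M` stable under the action of `B` is `0` or `M`. -/
theorem simple_over_dense_subring {A : Type*} [Ring A] [TopologicalSpace A]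
    [IsTopologicalRing A] (B : Subring A) (hB : Dense (B : Set A))
    {M : Type*} [AddCommGroup M] [Module Aᵐᵒᵖ M]
    (hadm : ∀ m : M, IsOpen {a : A | MulOpposite.op a • m = 0})
    (hsimple : IsSimpleModule Aᵐᵒᵖ M) :
    Nontrivial M ∧
      ∀ N : AddSubgroup M,
        (∀ b ∈ B, ∀ m ∈ N, MulOpposite.op b • m ∈ N) → N = ⊥ ∨ N = ⊤ := by
  constructor
  · exact IsSimpleModule.nontrivial Aᵐᵒᵖ M
  · intro N hN
    -- N is stable under all of A
    have key : ∀ (a : Aᵐᵒᵖ), ∀ m ∈ N, a • m ∈ N := by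
      intro a m hm
      set U : Set A := {c | MulOpposite.op (c - a.unop) • m = 0} with hU
      have hUopen : IsOpen U := by
        have : U = (fun c => c - a.unop) ⁻¹' {c | MulOpposite.op c • m = 0} := rfl
        rw [this]
        exact (hadm m).preimage (continuous_id.sub continuous_const)
      have hUne : U.Nonempty := ⟨a.unop, by simp [hU]⟩
      obtain ⟨b, hbB, hbU⟩ := hB.exists_mem_open hUopen hUne
      have hb0 : MulOpposite.op (b - a.unop) • m = 0 := hbU
      have : MulOpposite.op b • m - a • m = 0 := by
        rw [← hb0, MulOpposite.op_sub, sub_smul, MulOpposite.op_unop]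
      have heq : a • m = MulOpposite.op b • m := (sub_eq_zero.mp this).symm
      rw [heq]
      exact hN b hbB m hm
    let N' : Submodule Aᵐᵒᵖ M :=
      { carrier := N
        add_mem' := fun h1 h2 => N.add_mem h1 h2
        zero_mem' := N.zero_mem
        smul_mem' := fun a m hm => key a m hm }
    rcases hsimple.1.2 N' with h | h
    · left
      have : N'.toAddSubgroup = ⊥ := by rw [h]; rfl
      exact this
    · right
      have : N'.toAddSubgroup = ⊤ := by rw [h]; rfl
      exact this
end

section
/- Let A be a topological ring, B ⊆ A a dense subring, and M, M′ admissible right A-modules (for every element, its annihilator in A is open). Then every B-linear map f : M → M′ is automatically A-linear. In particular, if M and M′ are isomorphic as right B-modules then they are isomorphic as right A-modules. -/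
/-- Let `A` be a topological ring, `B ⊆ A` a dense subring, and `M`, `M′`
admissible right `A`-modules (annihilators of elements are open). Then every
`B`-linear (additive) map `f : M → M′` is automatically `A`-linear; in
particular if `M` and `M′` are isomorphic as right `B`-modules then they are
isomorphic as right `A`-modules. -/
theorem linear_over_dense_subring {A : Type*} [Ring A] [TopologicalSpace A]
    [IsTopologicalRing A] (B : Subring A) (hB : Dense (B : Set A))
    {M M' : Type*} [AddCommGroup M] [AddCommGroup M']
    [Module Aᵐᵒᵖ M] [Module Aᵐᵒᵖ M']
    (hadmM : ∀ m : M, IsOpen {a : A | MulOpposite.op a • m = 0})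
    (hadmM' : ∀ m : M', IsOpen {a : A | MulOpposite.op a • m = 0}) :
    (∀ f : M →+ M',
      (∀ b ∈ B, ∀ m : M, f (MulOpposite.op b • m) = MulOpposite.op b • f m) →
      ∀ (a : A) (m : M), f (MulOpposite.op a • m) = MulOpposite.op a • f m) ∧
    ((∃ e : M ≃+ M',
        ∀ b ∈ B, ∀ m : M, e (MulOpposite.op b • m) = MulOpposite.op b • e m) →
      ∃ e : M ≃+ M',
        ∀ (a : A) (m : M), e (MulOpposite.op a • m) = MulOpposite.op a • e m) := by
  have key : ∀ f : M →+ M',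
      (∀ b ∈ B, ∀ m : M, f (MulOpposite.op b • m) = MulOpposite.op b • f m) →
      ∀ (a : A) (m : M), f (MulOpposite.op a • m) = MulOpposite.op a • f m := by
    intro f hf a m
    -- the set of x with (x - a) annihilating both m and f m is an open nbhd of a
    set S : Set A := {x : A | MulOpposite.op x • m = 0} ∩
        {x : A | MulOpposite.op x • f m = 0} with hS
    have hSopen : IsOpen S := (hadmM m).inter (hadmM' (f m))
    have hVopen : IsOpen ((fun x : A => x - a) ⁻¹' S) :=
      hSopen.preimage (continuous_id.sub continuous_const)
    have haV : a ∈ (fun x : A => x - a) ⁻¹' S := by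
      simp [S, Set.mem_preimage]
    obtain ⟨b, hbB, hbV⟩ := hB.exists_mem_open hVopen ⟨a, haV⟩
    obtain ⟨h1, h2⟩ := hbV
    have hb1 : MulOpposite.op b • m = MulOpposite.op a • m := by
      have : MulOpposite.op (b - a) • m = 0 := h1
      rw [MulOpposite.op_sub, sub_smul, sub_eq_zero] at this
      exact this
    have hb2 : MulOpposite.op b • f m = MulOpposite.op a • f m := by
      have : MulOpposite.op (b - a) • f m = 0 := h2
      rw [MulOpposite.op_sub, sub_smul, sub_eq_zero] at this
      exact this
    calc f (MulOpposite.op a • m) = f (MulOpposite.op b • m) := by rw [hb1]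
      _ = MulOpposite.op b • f m := hf b hbB m
      _ = MulOpposite.op a • f m := hb2
  refine ⟨key, ?_⟩
  rintro ⟨e, he⟩
  exact ⟨e, key e.toAddMonoidHom (fun b hb m => he b hb m)⟩
end
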